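/- arXiv:2410.21114 — 2 statements merged into one kernel-verified Lean document; each statement's English description precedes it below -/
import Mathlib

section
/- (Existence of strong one-sided traces.) For every (x,t) ∈ ℝ × (0,∞): (i) lim_{x′→x⁻} u⁻(x′,t) = lim_{x′→x⁻} u⁺(x′,t) = u⁻(x,t) and lim_{x′→x⁺} u⁻(x′,t) = lim_{x′→x⁺} u⁺(x′,t) = u⁺(x,t); in particular the candidate entropy solution u := u⁺ has one-sided limits everywhere, with left trace u(x−,t) = u⁻(x,t) and right trace u(x+,t) = u⁺(x,t). (ii) If (xₙ,tₙ) → (x,t) in ℝ × (0,∞) and the sequence u⁺(xₙ,tₙ) (respectively u⁻(xₙ,tₙ)) converges, then its limit belongs to 𝒰(x,t). -/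
open MeasureTheory Filter Set

noncomputable def eFun (f φ : ℝ → ℝ) (u x t : ℝ) : ℝ :=
  t * (∫ s in (0:ℝ)..u, deriv (deriv f) s * (φ (x - t * deriv f s) - s))

def maxSet (f φ : ℝ → ℝ) (x t : ℝ) : Set ℝ :=
  {w : ℝ | ∀ v : ℝ, eFun f φ v x t ≤ eFun f φ w x t}

noncomputable def uPlus (f φ : ℝ → ℝ) (x t : ℝ) : ℝ := sInf (maxSet f φ x t)

noncomputable def uMinus (f φ : ℝ → ℝ) (x t : ℝ) : ℝ := sSup (maxSet f φ x t)

noncomputable def PhiF (φ : ℝ → ℝ) (y : ℝ) : ℝ := ∫ s in (0:ℝ)..y, φ s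

noncomputable def BF (f : ℝ → ℝ) (u : ℝ) : ℝ := ∫ s in (0:ℝ)..u, deriv (deriv f) s * s

noncomputable def EtilF (f φ : ℝ → ℝ) (u x t : ℝ) : ℝ :=
  PhiF φ (x - t * deriv f 0) - PhiF φ (x - t * deriv f u) - t * BF f u

lemma gC1 {f : ℝ → ℝ} (hf : ContDiff ℝ 2 f) : ContDiff ℝ 1 (deriv f) := by
  have h2 : (2 : WithTop ℕ∞) = 1 + 1 := by norm_num
  exact ((contDiff_succ_iff_deriv).mp (h2 ▸ hf)).2.2

lemma gDiff {f : ℝ → ℝ} (hf : ContDiff ℝ 2 f) : Differentiable ℝ (deriv f) :=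
  (contDiff_one_iff_deriv.mp (gC1 hf)).1

lemma gCont {f : ℝ → ℝ} (hf : ContDiff ℝ 2 f) : Continuous (deriv f) :=
  (gC1 hf).continuous

lemma aCont {f : ℝ → ℝ} (hf : ContDiff ℝ 2 f) : Continuous (deriv (deriv f)) :=
  (contDiff_one_iff_deriv.mp (gC1 hf)).2

lemma gMono {f : ℝ → ℝ} (hf : ContDiff ℝ 2 f)
    (hconv : ∀ u : ℝ, 0 ≤ deriv (deriv f) u) : Monotone (deriv f) :=
  monotone_of_deriv_nonneg (gDiff hf) hconv

lemma gStrict {f : ℝ → ℝ} (hf : ContDiff ℝ 2 f)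
    (hconv : ∀ u : ℝ, 0 ≤ deriv (deriv f) u)
    (hdeg : volume {u : ℝ | deriv (deriv f) u = 0} = 0) : StrictMono (deriv f) := by
  intro a b hab
  rcases lt_or_eq_of_le (gMono hf hconv hab.le) with h | h
  · exact h
  · exfalso
    have hconst : ∀ s ∈ Icc a b, deriv f s = deriv f a := fun s hs =>
      le_antisymm (h ▸ gMono hf hconv hs.2) (gMono hf hconv hs.1)
    have hsub : Ioo a b ⊆ {u : ℝ | deriv (deriv f) u = 0} := by
      intro s hs
      have hev : deriv f =ᶠ[nhds s] fun _ => deriv f a := by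
        filter_upwards [Ioo_mem_nhds hs.1 hs.2] with y hy
        exact hconst y (Ioo_subset_Icc_self hy)
      have := hev.deriv_eq
      simpa using this
    have h1 : volume (Ioo a b) = 0 :=
      measure_mono_null hsub hdeg
    rw [Real.volume_Ioo] at h1
    have := sub_pos.mpr hab
    simp only [ENNReal.ofReal_eq_zero] at h1
    linarith

lemma aPosae {f : ℝ → ℝ}
    (hconv : ∀ u : ℝ, 0 ≤ deriv (deriv f) u)
    (hdeg : volume {u : ℝ | deriv (deriv f) u = 0} = 0) :
    ∀ᵐ s, 0 < deriv (deriv f) s := by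
  rw [ae_iff]
  refine measure_mono_null (fun s hs => ?_) hdeg
  exact le_antisymm (not_lt.mp hs) (hconv s)

/-- interval integrability of a measurable function bounded on the interval -/
lemma II_of_bdd {h : ℝ → ℝ} {a b C : ℝ} (hm : Measurable h)
    (hb : ∀ s ∈ uIcc a b, |h s| ≤ C) : IntervalIntegrable h volume a b := by
  rw [intervalIntegrable_iff]
  haveI : IsFiniteMeasure (volume.restrict (uIoc a b)) := by
    constructor
    rw [Measure.restrict_apply_univ, uIoc, Real.volume_Ioc]
    exact ENNReal.ofReal_lt_top
  refine Integrable.mono' (integrable_const C) hm.aestronglyMeasurable ?_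
  filter_upwards [ae_restrict_mem measurableSet_uIoc] with s hs
  simpa using hb s (uIoc_subset_uIcc hs)

lemma phi_II {φ : ℝ → ℝ} {M : ℝ} (hφmeas : Measurable φ) (hφbdd : ∀ x : ℝ, |φ x| ≤ M)
    (a b : ℝ) : IntervalIntegrable φ volume a b :=
  II_of_bdd hφmeas (fun s _ => hφbdd s)

lemma PhiF_cont {φ : ℝ → ℝ} {M : ℝ} (hφmeas : Measurable φ) (hφbdd : ∀ x : ℝ, |φ x| ≤ M) :
    Continuous (PhiF φ) :=
  intervalIntegral.continuous_primitive (fun a b => phi_II hφmeas hφbdd a b) 0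

lemma PhiF_sub {φ : ℝ → ℝ} {M : ℝ} (hφmeas : Measurable φ) (hφbdd : ∀ x : ℝ, |φ x| ≤ M)
    (a b : ℝ) : PhiF φ b - PhiF φ a = ∫ s in a..b, φ s :=
  intervalIntegral.integral_interval_sub_left (phi_II hφmeas hφbdd 0 b)
    (phi_II hφmeas hφbdd 0 a)

lemma BF_cont {f : ℝ → ℝ} (hf : ContDiff ℝ 2 f) : Continuous (BF f) :=
  intervalIntegral.continuous_primitive
    (fun a b => ((aCont hf).mul continuous_id).intervalIntegrable a b) 0

lemma EtilF_cont {f φ : ℝ → ℝ} {M : ℝ} (hf : ContDiff ℝ 2 f)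
    (hφmeas : Measurable φ) (hφbdd : ∀ x : ℝ, |φ x| ≤ M) :
    Continuous (fun p : ℝ × ℝ × ℝ => EtilF f φ p.1 p.2.1 p.2.2) := by
  have hP := PhiF_cont hφmeas hφbdd
  have hg := gCont hf
  have hB := BF_cont hf
  unfold EtilF
  fun_prop

/-- the integrand of eFun is interval integrable -/
lemma eInt_II {f φ : ℝ → ℝ} {M : ℝ} (hf : ContDiff ℝ 2 f)
    (hφmeas : Measurable φ) (hφbdd : ∀ x : ℝ, |φ x| ≤ M) (x t a b : ℝ) :
    IntervalIntegrable (fun s => deriv (deriv f) s * φ (x - t * deriv f s)) volume a b := by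
  obtain ⟨C, hC⟩ := (isCompact_uIcc (a := a) (b := b)).exists_bound_of_continuousOn
    (aCont hf).continuousOn
  refine II_of_bdd (((aCont hf).measurable).mul
    (hφmeas.comp (by fun_prop : Measurable (fun s : ℝ => x - t * deriv f s)))) (C := C * M) ?_
  intro s hs
  rw [abs_mul]
  have h1 : |deriv (deriv f) s| ≤ C := by simpa using hC s hs
  have h2 : |φ (x - t * deriv f s)| ≤ M := hφbdd _
  have h0 : (0:ℝ) ≤ |deriv (deriv f) s| := abs_nonneg _
  nlinarith [abs_nonneg (φ (x - t * deriv f s))]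

/-- key change of variables -/
lemma subst_key {f φ : ℝ → ℝ} {M : ℝ} (hf : ContDiff ℝ 2 f)
    (hconv : ∀ u : ℝ, 0 ≤ deriv (deriv f) u)
    (hdeg : volume {u : ℝ | deriv (deriv f) u = 0} = 0)
    (hφmeas : Measurable φ) (hφbdd : ∀ x : ℝ, |φ x| ≤ M)
    {t : ℝ} (ht : 0 < t) (x u : ℝ) :
    t * (∫ s in (0:ℝ)..u, deriv (deriv f) s * φ (x - t * deriv f s))
      = PhiF φ (x - t * deriv f 0) - PhiF φ (x - t * deriv f u) := by
  set ψ : ℝ → ℝ := fun s => x - t * deriv f s with hψ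
  have hganti : StrictAnti ψ := by
    intro s s' hss'
    have := gStrict hf hconv hdeg hss'
    have := mul_lt_mul_of_pos_left this ht
    simp only [hψ]
    linarith
  have hψcont : Continuous ψ := by
    have := gCont hf; fun_prop
  -- derivative
  have hder : ∀ s : ℝ, HasDerivAt ψ (-(t * deriv (deriv f) s)) s := by
    intro s
    have h1 : HasDerivAt (deriv f) (deriv (deriv f) s) s :=
      ((gDiff hf) s).hasDerivAt
    simpa using ((h1.const_mul t).const_sub x)
  -- image of uIcc
  have himg : ∀ a b : ℝ, ψ '' (uIcc a b) = uIcc (ψ a) (ψ b) := by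
    intro a b
    apply Subset.antisymm
    · rintro - ⟨s, hs, rfl⟩
      rcases le_total a b with hab | hab
      · rw [uIcc_of_le hab] at hs
        rw [uIcc_of_ge (hganti.antitone hab)]
        exact ⟨hganti.antitone hs.2, hganti.antitone hs.1⟩
      · rw [uIcc_of_ge hab] at hs
        rw [uIcc_of_le (hganti.antitone hab)]
        exact ⟨hganti.antitone hs.2, hganti.antitone hs.1⟩
    · exact intermediate_value_uIcc hψcont.continuousOn
  -- Jacobian change of variables on the set uIcc 0 u
  have hcv : ∫ y in ψ '' (uIcc (0:ℝ) u), φ y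
      = ∫ s in uIcc (0:ℝ) u, |(-(t * deriv (deriv f) s))| • φ (ψ s) :=
    integral_image_eq_integral_abs_deriv_smul measurableSet_uIcc
      (fun s _ => (hder s).hasDerivWithinAt) hganti.injective.injOn φ
  have habs : ∀ s : ℝ, |(-(t * deriv (deriv f) s))| • φ (ψ s)
      = t * (deriv (deriv f) s * φ (ψ s)) := by
    intro s
    rw [abs_neg, abs_mul, abs_of_pos ht, abs_of_nonneg (hconv s), smul_eq_mul]
    ring
  simp only [habs] at hcv
  -- now orient
  have hint : IntervalIntegrable (fun s => t * (deriv (deriv f) s * φ (ψ s))) volume 0 u :=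
    (eInt_II hf hφmeas hφbdd x t 0 u).const_mul t
  rcases le_total (0:ℝ) u with hu | hu
  · have h1 : ψ u ≤ ψ 0 := hganti.antitone hu
    rw [himg, uIcc_of_le hu, uIcc_of_ge h1] at hcv
    rw [← intervalIntegral.integral_const_mul, intervalIntegral.integral_of_le hu,
      ← integral_Icc_eq_integral_Ioc, ← hcv, integral_Icc_eq_integral_Ioc,
      ← intervalIntegral.integral_of_le h1, ← PhiF_sub hφmeas hφbdd]
  · have h1 : ψ 0 ≤ ψ u := hganti.antitone hu
    rw [himg, uIcc_of_ge hu, uIcc_of_le h1] at hcv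
    rw [← intervalIntegral.integral_const_mul, intervalIntegral.integral_of_ge hu,
      ← integral_Icc_eq_integral_Ioc, ← hcv, integral_Icc_eq_integral_Ioc,
      ← intervalIntegral.integral_of_le h1, ← PhiF_sub hφmeas hφbdd, neg_sub]

/-- eFun equals its representation EtilF when t > 0 -/
lemma eFun_eq {f φ : ℝ → ℝ} {M : ℝ} (hf : ContDiff ℝ 2 f)
    (hconv : ∀ u : ℝ, 0 ≤ deriv (deriv f) u)
    (hdeg : volume {u : ℝ | deriv (deriv f) u = 0} = 0)
    (hφmeas : Measurable φ) (hφbdd : ∀ x : ℝ, |φ x| ≤ M)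
    {t : ℝ} (ht : 0 < t) (u x : ℝ) :
    eFun f φ u x t = EtilF f φ u x t := by
  have hsplit : (∫ s in (0:ℝ)..u, deriv (deriv f) s * (φ (x - t * deriv f s) - s))
      = (∫ s in (0:ℝ)..u, deriv (deriv f) s * φ (x - t * deriv f s))
        - ∫ s in (0:ℝ)..u, deriv (deriv f) s * s := by
    rw [← intervalIntegral.integral_sub (g := fun s => deriv (deriv f) s * s)
      (eInt_II hf hφmeas hφbdd x t 0 u)
      (((aCont hf).mul continuous_id').intervalIntegrable 0 u)]
    congr 1; ext s; ring
  unfold eFun EtilF BF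
  rw [hsplit, mul_sub, subst_key hf hconv hdeg hφmeas hφbdd ht x u]

/-- a.e.-positivity integral lemma -/
lemma integral_pos_aux {f : ℝ → ℝ} (hf : ContDiff ℝ 2 f)
    (hconv : ∀ u : ℝ, 0 ≤ deriv (deriv f) u)
    (hdeg : volume {u : ℝ | deriv (deriv f) u = 0} = 0)
    {a b : ℝ} (hab : a < b) (c : ℝ → ℝ) (hc : Continuous c)
    (h0 : ∀ s ∈ Ioc a b, 0 ≤ c s) (h1 : ∀ s ∈ Ioo a b, 0 < c s) :
    0 < ∫ s in a..b, deriv (deriv f) s * c s := by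
  set F : ℝ → ℝ := fun s => deriv (deriv f) s * c s with hF
  have hFi : IntegrableOn F (Ioc a b) := ((aCont hf).mul hc).integrableOn_Ioc
  rw [intervalIntegral.integral_of_le hab.le]
  rw [setIntegral_pos_iff_support_of_nonneg_ae ?hnn hFi]
  · -- 0 < volume (support F ∩ Ioc a b)
    have hsub : Ioo a b ⊆ (Function.support F ∩ Ioc a b) ∪ {u : ℝ | deriv (deriv f) u = 0} := by
      intro s hs
      by_cases hz : deriv (deriv f) s = 0
      · exact Or.inr hz
      · refine Or.inl ⟨?_, Ioo_subset_Ioc_self hs⟩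
        have hcs := h1 s hs
        have : 0 < deriv (deriv f) s := lt_of_le_of_ne (hconv s) (Ne.symm hz)
        exact ne_of_gt (mul_pos this hcs)
    have hv : volume (Ioo a b) ≤ volume (Function.support F ∩ Ioc a b) := by
      calc volume (Ioo a b)
          ≤ volume ((Function.support F ∩ Ioc a b) ∪ {u : ℝ | deriv (deriv f) u = 0}) :=
            measure_mono hsub
        _ ≤ volume (Function.support F ∩ Ioc a b) + volume {u : ℝ | deriv (deriv f) u = 0} :=
            measure_union_le _ _
        _ = volume (Function.support F ∩ Ioc a b) := by rw [hdeg, add_zero]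
    refine lt_of_lt_of_le ?_ hv
    rw [Real.volume_Ioo]
    simpa using sub_pos.mpr hab
  case hnn =>
    filter_upwards [ae_restrict_mem measurableSet_Ioc] with s hs
    exact mul_nonneg (hconv s) (h0 s hs)

lemma M_nonneg {φ : ℝ → ℝ} {M : ℝ} (hφbdd : ∀ x : ℝ, |φ x| ≤ M) : 0 ≤ M :=
  le_trans (abs_nonneg _) (hφbdd 0)

/-- strict decay to the right of M -/
lemma eFun_lt_right {f φ : ℝ → ℝ} {M : ℝ} (hf : ContDiff ℝ 2 f)
    (hconv : ∀ u : ℝ, 0 ≤ deriv (deriv f) u)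
    (hdeg : volume {u : ℝ | deriv (deriv f) u = 0} = 0)
    (hφmeas : Measurable φ) (hφbdd : ∀ x : ℝ, |φ x| ≤ M)
    {t : ℝ} (ht : 0 < t) (x : ℝ) {v : ℝ} (hv : M < v) :
    eFun f φ v x t < eFun f φ M x t := by
  have hI : ∀ w : ℝ, IntervalIntegrable
      (fun s => deriv (deriv f) s * (φ (x - t * deriv f s) - s)) volume 0 w := by
    intro w
    have := (eInt_II hf hφmeas hφbdd x t 0 w).sub
      (((aCont hf).mul continuous_id').intervalIntegrable 0 w)
    refine this.congr ?_
    intro s _; simp only [Pi.mul_apply]; ring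
  have hIMv : IntervalIntegrable
      (fun s => deriv (deriv f) s * (φ (x - t * deriv f s) - s)) volume M v := by
    exact (hI v).symm.trans (hI M) |>.symm
  have hadj : eFun f φ v x t - eFun f φ M x t
      = t * ∫ s in M..v, deriv (deriv f) s * (φ (x - t * deriv f s) - s) := by
    unfold eFun
    rw [← mul_sub]
    congr 1
    rw [← intervalIntegral.integral_add_adjacent_intervals (hI M) hIMv]
    ring
  have hmono : (∫ s in M..v, deriv (deriv f) s * (φ (x - t * deriv f s) - s))
      ≤ ∫ s in M..v, deriv (deriv f) s * (M - s) := by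
    apply intervalIntegral.integral_mono_on hv.le hIMv
      (((aCont hf).mul (continuous_const.sub continuous_id')).intervalIntegrable M v)
    intro s hs
    have := hφbdd (x - t * deriv f s)
    have h1 : φ (x - t * deriv f s) - s ≤ M - s := by
      have := abs_le.mp this
      linarith [this.2]
    exact mul_le_mul_of_nonneg_left h1 (hconv s)
  have hneg : (∫ s in M..v, deriv (deriv f) s * (M - s)) < 0 := by
    have hpos := integral_pos_aux hf hconv hdeg hv (fun s => s - M)
      (continuous_id'.sub continuous_const)
      (fun s hs => by show (0:ℝ) ≤ s - M; linarith [hs.1])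
      (fun s hs => by show (0:ℝ) < s - M; linarith [hs.1])
    have : (∫ s in M..v, deriv (deriv f) s * (M - s))
        = -∫ s in M..v, deriv (deriv f) s * (s - M) := by
      rw [← intervalIntegral.integral_neg]; congr 1; ext s; ring
    rw [this]; linarith
  nlinarith

/-- strict decay to the left of -M -/
lemma eFun_lt_left {f φ : ℝ → ℝ} {M : ℝ} (hf : ContDiff ℝ 2 f)
    (hconv : ∀ u : ℝ, 0 ≤ deriv (deriv f) u)
    (hdeg : volume {u : ℝ | deriv (deriv f) u = 0} = 0)
    (hφmeas : Measurable φ) (hφbdd : ∀ x : ℝ, |φ x| ≤ M)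
    {t : ℝ} (ht : 0 < t) (x : ℝ) {v : ℝ} (hv : v < -M) :
    eFun f φ v x t < eFun f φ (-M) x t := by
  have hI : ∀ w : ℝ, IntervalIntegrable
      (fun s => deriv (deriv f) s * (φ (x - t * deriv f s) - s)) volume 0 w := by
    intro w
    have := (eInt_II hf hφmeas hφbdd x t 0 w).sub
      (((aCont hf).mul continuous_id').intervalIntegrable 0 w)
    refine this.congr ?_
    intro s _; simp only [Pi.mul_apply]; ring
  have hIMv : IntervalIntegrable
      (fun s => deriv (deriv f) s * (φ (x - t * deriv f s) - s)) volume v (-M) := by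
    exact (hI (-M)).symm.trans (hI v) |>.symm
  have hadj : eFun f φ (-M) x t - eFun f φ v x t
      = t * ∫ s in v..(-M), deriv (deriv f) s * (φ (x - t * deriv f s) - s) := by
    unfold eFun
    rw [← mul_sub]
    congr 1
    rw [← intervalIntegral.integral_add_adjacent_intervals (hI v) hIMv]
    ring
  have hmono : (∫ s in v..(-M), deriv (deriv f) s * (-M - s))
      ≤ ∫ s in v..(-M), deriv (deriv f) s * (φ (x - t * deriv f s) - s) := by
    apply intervalIntegral.integral_mono_on hv.le
      (((aCont hf).mul (continuous_const.sub continuous_id')).intervalIntegrable v (-M)) hIMv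
    intro s hs
    have := abs_le.mp (hφbdd (x - t * deriv f s))
    have h1 : -M - s ≤ φ (x - t * deriv f s) - s := by linarith [this.1]
    exact mul_le_mul_of_nonneg_left h1 (hconv s)
  have hpos : 0 < ∫ s in v..(-M), deriv (deriv f) s * (-M - s) := by
    exact integral_pos_aux hf hconv hdeg hv (fun s => -M - s)
      (continuous_const.sub continuous_id')
      (fun s hs => by show (0:ℝ) ≤ -M - s; linarith [hs.2])
      (fun s hs => by show (0:ℝ) < -M - s; linarith [hs.2])
  nlinarith

lemma maxSet_subset {f φ : ℝ → ℝ} {M : ℝ} (hf : ContDiff ℝ 2 f)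
    (hconv : ∀ u : ℝ, 0 ≤ deriv (deriv f) u)
    (hdeg : volume {u : ℝ | deriv (deriv f) u = 0} = 0)
    (hφmeas : Measurable φ) (hφbdd : ∀ x : ℝ, |φ x| ≤ M)
    {t : ℝ} (ht : 0 < t) (x : ℝ) : maxSet f φ x t ⊆ Icc (-M) M := by
  intro w hw
  constructor
  · by_contra h
    push_neg at h
    exact absurd (hw (-M)) (not_le.mpr (eFun_lt_left hf hconv hdeg hφmeas hφbdd ht x h))
  · by_contra h
    push_neg at h
    exact absurd (hw M) (not_le.mpr (eFun_lt_right hf hconv hdeg hφmeas hφbdd ht x h))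

lemma eFun_cont1 {f φ : ℝ → ℝ} {M : ℝ} (hf : ContDiff ℝ 2 f)
    (hconv : ∀ u : ℝ, 0 ≤ deriv (deriv f) u)
    (hdeg : volume {u : ℝ | deriv (deriv f) u = 0} = 0)
    (hφmeas : Measurable φ) (hφbdd : ∀ x : ℝ, |φ x| ≤ M)
    {t : ℝ} (ht : 0 < t) (x : ℝ) : Continuous (fun w => eFun f φ w x t) := by
  have heq : (fun w => eFun f φ w x t) = fun w => EtilF f φ w x t :=
    funext fun w => eFun_eq hf hconv hdeg hφmeas hφbdd ht w x
  rw [heq]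
  have hP := PhiF_cont hφmeas hφbdd
  have hg := gCont hf
  have hB := BF_cont hf
  unfold EtilF
  fun_prop

lemma maxSet_nonempty {f φ : ℝ → ℝ} {M : ℝ} (hf : ContDiff ℝ 2 f)
    (hconv : ∀ u : ℝ, 0 ≤ deriv (deriv f) u)
    (hdeg : volume {u : ℝ | deriv (deriv f) u = 0} = 0)
    (hφmeas : Measurable φ) (hφbdd : ∀ x : ℝ, |φ x| ≤ M)
    {t : ℝ} (ht : 0 < t) (x : ℝ) : (maxSet f φ x t).Nonempty := by
  have hMM : (-M : ℝ) ≤ M := by linarith [M_nonneg hφbdd]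
  have hcont : ContinuousOn (fun w => eFun f φ w x t) (Icc (-M) M) :=
    (eFun_cont1 hf hconv hdeg hφmeas hφbdd ht x).continuousOn
  obtain ⟨w₀, hw₀mem, hw₀⟩ := isCompact_Icc.exists_isMaxOn (nonempty_Icc.mpr hMM) hcont
  refine ⟨w₀, fun v => ?_⟩
  rcases le_or_gt v M with hvM | hvM
  · rcases le_or_gt (-M) v with hvm | hvm
    · exact hw₀ ⟨hvm, hvM⟩
    · exact le_trans (eFun_lt_left hf hconv hdeg hφmeas hφbdd ht x hvm).le
        (hw₀ (⟨le_refl _, hMM⟩ : (-M : ℝ) ∈ Icc (-M) M))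
  · exact le_trans (eFun_lt_right hf hconv hdeg hφmeas hφbdd ht x hvM).le
      (hw₀ (⟨hMM, le_refl _⟩ : (M : ℝ) ∈ Icc (-M) M))

lemma maxSet_closed {f φ : ℝ → ℝ} {M : ℝ} (hf : ContDiff ℝ 2 f)
    (hconv : ∀ u : ℝ, 0 ≤ deriv (deriv f) u)
    (hdeg : volume {u : ℝ | deriv (deriv f) u = 0} = 0)
    (hφmeas : Measurable φ) (hφbdd : ∀ x : ℝ, |φ x| ≤ M)
    {t : ℝ} (ht : 0 < t) (x : ℝ) : IsClosed (maxSet f φ x t) := by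
  have hcont : Continuous (fun w => eFun f φ w x t) :=
    eFun_cont1 hf hconv hdeg hφmeas hφbdd ht x
  have : maxSet f φ x t = ⋂ v : ℝ, {w : ℝ | eFun f φ v x t ≤ eFun f φ w x t} := by
    ext w; simp [maxSet, mem_iInter]
  rw [this]
  exact isClosed_iInter fun v => isClosed_le continuous_const hcont

lemma uPlus_mem {f φ : ℝ → ℝ} {M : ℝ} (hf : ContDiff ℝ 2 f)
    (hconv : ∀ u : ℝ, 0 ≤ deriv (deriv f) u)
    (hdeg : volume {u : ℝ | deriv (deriv f) u = 0} = 0)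
    (hφmeas : Measurable φ) (hφbdd : ∀ x : ℝ, |φ x| ≤ M)
    {t : ℝ} (ht : 0 < t) (x : ℝ) : uPlus f φ x t ∈ maxSet f φ x t :=
  (maxSet_closed hf hconv hdeg hφmeas hφbdd ht x).csInf_mem
    (maxSet_nonempty hf hconv hdeg hφmeas hφbdd ht x)
    (BddBelow.mono (maxSet_subset hf hconv hdeg hφmeas hφbdd ht x) bddBelow_Icc)

lemma uMinus_mem {f φ : ℝ → ℝ} {M : ℝ} (hf : ContDiff ℝ 2 f)
    (hconv : ∀ u : ℝ, 0 ≤ deriv (deriv f) u)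
    (hdeg : volume {u : ℝ | deriv (deriv f) u = 0} = 0)
    (hφmeas : Measurable φ) (hφbdd : ∀ x : ℝ, |φ x| ≤ M)
    {t : ℝ} (ht : 0 < t) (x : ℝ) : uMinus f φ x t ∈ maxSet f φ x t :=
  (maxSet_closed hf hconv hdeg hφmeas hφbdd ht x).csSup_mem
    (maxSet_nonempty hf hconv hdeg hφmeas hφbdd ht x)
    (BddAbove.mono (maxSet_subset hf hconv hdeg hφmeas hφbdd ht x) bddAbove_Icc)

/-- limits of maximizers are maximizers -/
lemma limit_mem_maxSet {f φ : ℝ → ℝ} {M : ℝ} (hf : ContDiff ℝ 2 f)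
    (hconv : ∀ u : ℝ, 0 ≤ deriv (deriv f) u)
    (hdeg : volume {u : ℝ | deriv (deriv f) u = 0} = 0)
    (hφmeas : Measurable φ) (hφbdd : ∀ x : ℝ, |φ x| ≤ M)
    {x t L : ℝ} (ht : 0 < t) {xs ts ws : ℕ → ℝ} (hts : ∀ n, 0 < ts n)
    (hxs : Tendsto xs atTop (nhds x)) (htsl : Tendsto ts atTop (nhds t))
    (hws : ∀ n, ws n ∈ maxSet f φ (xs n) (ts n))
    (hwsl : Tendsto ws atTop (nhds L)) : L ∈ maxSet f φ x t := by
  intro v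
  have hEc := EtilF_cont (M := M) hf hφmeas hφbdd
  have h1 : Tendsto (fun n => EtilF f φ v (xs n) (ts n)) atTop (nhds (EtilF f φ v x t)) := by
    have htr : Tendsto (fun n => ((v, xs n, ts n) : ℝ × ℝ × ℝ)) atTop (nhds (v, x, t)) :=
      tendsto_const_nhds.prodMk_nhds (hxs.prodMk_nhds htsl)
    have := (hEc.tendsto (v, x, t)).comp htr
    exact this
  have h2 : Tendsto (fun n => EtilF f φ (ws n) (xs n) (ts n)) atTop (nhds (EtilF f φ L x t)) := by
    have htr : Tendsto (fun n => ((ws n, xs n, ts n) : ℝ × ℝ × ℝ)) atTop (nhds (L, x, t)) :=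
      hwsl.prodMk_nhds (hxs.prodMk_nhds htsl)
    have := (hEc.tendsto (L, x, t)).comp htr
    exact this
  have hle : ∀ n, EtilF f φ v (xs n) (ts n) ≤ EtilF f φ (ws n) (xs n) (ts n) := by
    intro n
    rw [← eFun_eq hf hconv hdeg hφmeas hφbdd (hts n), ← eFun_eq hf hconv hdeg hφmeas hφbdd (hts n)]
    exact hws n v
  have := le_of_tendsto_of_tendsto' h1 h2 hle
  rwa [eFun_eq hf hconv hdeg hφmeas hφbdd ht, eFun_eq hf hconv hdeg hφmeas hφbdd ht]

/-- FTC for deriv f -/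
lemma gFTC {f : ℝ → ℝ} (hf : ContDiff ℝ 2 f) (a b : ℝ) :
    ∫ s in a..b, deriv (deriv f) s = deriv f b - deriv f a :=
  intervalIntegral.integral_deriv_eq_sub (fun s _ => gDiff hf s)
    ((aCont hf).intervalIntegrable a b)

/-- B increments vs g increments: upper and lower bounds -/
lemma B_upper {f : ℝ → ℝ} (hf : ContDiff ℝ 2 f)
    (hconv : ∀ u : ℝ, 0 ≤ deriv (deriv f) u) {a b : ℝ} (hab : a ≤ b) :
    ∫ s in a..b, deriv (deriv f) s * s ≤ b * (deriv f b - deriv f a) := by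
  rw [← gFTC hf a b, ← intervalIntegral.integral_const_mul]
  apply intervalIntegral.integral_mono_on hab
    (((aCont hf).mul continuous_id').intervalIntegrable a b)
    ((continuous_const.mul (aCont hf)).intervalIntegrable a b)
  intro s hs
  have := hconv s
  simp only [Pi.mul_apply]
  nlinarith [hs.2]

lemma B_lower {f : ℝ → ℝ} (hf : ContDiff ℝ 2 f)
    (hconv : ∀ u : ℝ, 0 ≤ deriv (deriv f) u) {a b : ℝ} (hab : a ≤ b) :
    a * (deriv f b - deriv f a) ≤ ∫ s in a..b, deriv (deriv f) s * s := by
  rw [← gFTC hf a b, ← intervalIntegral.integral_const_mul]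
  apply intervalIntegral.integral_mono_on hab
    ((continuous_const.mul (aCont hf)).intervalIntegrable a b)
    (((aCont hf).mul continuous_id').intervalIntegrable a b)
  intro s hs
  have := hconv s
  simp only [Pi.mul_apply]
  nlinarith [hs.1]

lemma B_lower_strict {f : ℝ → ℝ} (hf : ContDiff ℝ 2 f)
    (hconv : ∀ u : ℝ, 0 ≤ deriv (deriv f) u)
    (hdeg : volume {u : ℝ | deriv (deriv f) u = 0} = 0) {a b : ℝ} (hab : a < b) :
    a * (deriv f b - deriv f a) < ∫ s in a..b, deriv (deriv f) s * s := by
  have hpos := integral_pos_aux hf hconv hdeg hab (fun s => s - a)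
    (continuous_id'.sub continuous_const)
    (fun s hs => by show (0:ℝ) ≤ s - a; linarith [hs.1])
    (fun s hs => by show (0:ℝ) < s - a; linarith [hs.1])
  have hsplit : (∫ s in a..b, deriv (deriv f) s * (s - a))
      = (∫ s in a..b, deriv (deriv f) s * s) - a * (deriv f b - deriv f a) := by
    rw [← gFTC hf a b, ← intervalIntegral.integral_const_mul,
      ← intervalIntegral.integral_sub (f := fun s => deriv (deriv f) s * s)
        (g := fun s => a * deriv (deriv f) s) (((aCont hf).mul continuous_id').intervalIntegrable a b)
        ((continuous_const.mul (aCont hf)).intervalIntegrable a b)]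
    congr 1; ext s; ring
  linarith [hsplit ▸ hpos]

/-- B increment as interval integral -/
lemma BF_sub {f : ℝ → ℝ} (hf : ContDiff ℝ 2 f) (a b : ℝ) :
    BF f b - BF f a = ∫ s in a..b, deriv (deriv f) s * s :=
  intervalIntegral.integral_interval_sub_left
    (((aCont hf).mul continuous_id').intervalIntegrable 0 b)
    (((aCont hf).mul continuous_id').intervalIntegrable 0 a)

noncomputable def deltaF (f : ℝ → ℝ) (M : ℝ) : ℝ :=
  min (deriv f (M + 1) - deriv f M) (deriv f (-M) - deriv f (-M - 1))

lemma deltaF_pos {f : ℝ → ℝ} (hf : ContDiff ℝ 2 f)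
    (hconv : ∀ u : ℝ, 0 ≤ deriv (deriv f) u)
    (hdeg : volume {u : ℝ | deriv (deriv f) u = 0} = 0) (M : ℝ) : 0 < deltaF f M := by
  have h1 := gStrict hf hconv hdeg (show (M:ℝ) < M + 1 by linarith)
  have h2 := gStrict hf hconv hdeg (show (-M - 1:ℝ) < -M by linarith)
  exact lt_min (by linarith) (by linarith)

lemma surj_aux {f : ℝ → ℝ} (hf : ContDiff ℝ 2 f)
    (hconv : ∀ u : ℝ, 0 ≤ deriv (deriv f) u)
    (hdeg : volume {u : ℝ | deriv (deriv f) u = 0} = 0) {M w ε : ℝ}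
    (hw : w ∈ Icc (-M) M) (hε : |ε| ≤ deltaF f M) :
    ∃ w' : ℝ, deriv f w' = deriv f w + ε := by
  have hM0 : (0:ℝ) ≤ M := by
    rcases hw with ⟨h1, h2⟩; linarith
  have hMM : (-M - 1 : ℝ) ≤ M + 1 := by linarith
  have hmono := gMono hf hconv
  have habs := abs_le.mp hε
  have hd1 : deltaF f M ≤ deriv f (M + 1) - deriv f M := min_le_left _ _
  have hd2 : deltaF f M ≤ deriv f (-M) - deriv f (-M - 1) := min_le_right _ _
  have hmem : deriv f w + ε ∈ Icc (deriv f (-M - 1)) (deriv f (M + 1)) := by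
    constructor
    · have := hmono hw.1
      linarith [habs.1]
    · have := hmono hw.2
      linarith [habs.2]
  obtain ⟨w', _, hw'⟩ := intermediate_value_Icc hMM (gCont hf).continuousOn hmem
  exact ⟨w', hw'⟩

/-- Key monotonicity (strict supermodularity) lemma -/
lemma key_mono {f φ : ℝ → ℝ} {M : ℝ} (hf : ContDiff ℝ 2 f)
    (hconv : ∀ u : ℝ, 0 ≤ deriv (deriv f) u)
    (hdeg : volume {u : ℝ | deriv (deriv f) u = 0} = 0)
    (hφmeas : Measurable φ) (hφbdd : ∀ x : ℝ, |φ x| ≤ M)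
    {t x₁ x₂ w₁ w₂ : ℝ} (ht : 0 < t) (hx : x₁ < x₂) (hxd : x₂ - x₁ ≤ t * deltaF f M)
    (hw₁ : w₁ ∈ maxSet f φ x₁ t) (hw₂ : w₂ ∈ maxSet f φ x₂ t) :
    t * (deriv f w₂ - deriv f w₁) ≤ x₂ - x₁ := by
  by_contra hcon
  push_neg at hcon
  set ε : ℝ := (x₂ - x₁) / t with hεdef
  have hε0 : 0 < ε := div_pos (by linarith) ht
  have teps : t * ε = x₂ - x₁ := by
    rw [hεdef]; field_simp
  have hεδ : ε ≤ deltaF f M := by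
    rw [hεdef, div_le_iff₀ ht]
    linarith [hxd]
  have hεlt : t * ε < t * (deriv f w₂ - deriv f w₁) := by rw [teps]; exact hcon
  have hεlt' : ε < deriv f w₂ - deriv f w₁ := by
    exact lt_of_mul_lt_mul_left hεlt ht.le
  have hw₁M := maxSet_subset hf hconv hdeg hφmeas hφbdd ht x₁ hw₁
  have hw₂M := maxSet_subset hf hconv hdeg hφmeas hφbdd ht x₂ hw₂
  obtain ⟨w₁', hw₁'⟩ := surj_aux hf hconv hdeg hw₁M (by rwa [abs_of_pos hε0])
  obtain ⟨w₂', hw₂'⟩ := surj_aux hf hconv hdeg (ε := -ε) hw₂M (by rwa [abs_neg, abs_of_pos hε0])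
  have hgs := gStrict hf hconv hdeg
  -- orders
  have hw11 : w₁ < w₁' := hgs.lt_iff_lt.mp (by rw [hw₁']; linarith)
  have hw22 : w₂' < w₂ := hgs.lt_iff_lt.mp (by rw [hw₂']; linarith)
  have hw12 : w₁ < w₂' := hgs.lt_iff_lt.mp (by rw [hw₂']; linarith)
  have hw12' : w₁' < w₂ := hgs.lt_iff_lt.mp (by rw [hw₁']; linarith)
  -- optimality converted
  have h₁ := hw₁ w₂'
  have h₂ := hw₂ w₁'
  rw [eFun_eq hf hconv hdeg hφmeas hφbdd ht, eFun_eq hf hconv hdeg hφmeas hφbdd ht] at h₁ h₂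
  have e1 : x₁ - t * deriv f w₂' = x₂ - t * deriv f w₂ := by
    rw [hw₂']; linear_combination teps
  have e2 : x₂ - t * deriv f w₁' = x₁ - t * deriv f w₁ := by
    rw [hw₁']; linear_combination -teps
  unfold EtilF at h₁ h₂
  rw [e1] at h₁
  rw [e2] at h₂
  -- strict inequality on B increments
  have d₁ : BF f w₁' - BF f w₁ = ∫ s in w₁..w₁', deriv (deriv f) s * s := BF_sub hf w₁ w₁'
  have d₂ : BF f w₂ - BF f w₂' = ∫ s in w₂'..w₂, deriv (deriv f) s * s := BF_sub hf w₂' w₂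
  have hε1 : deriv f w₁' - deriv f w₁ = ε := by rw [hw₁']; ring
  have hε2 : deriv f w₂ - deriv f w₂' = ε := by rw [hw₂']; ring
  have hBlt : BF f w₁' - BF f w₁ < BF f w₂ - BF f w₂' := by
    rcases le_or_gt w₁' w₂' with hcase | hcase
    · have u1 := B_upper hf hconv hw11.le
      have u2 := B_lower_strict hf hconv hdeg hw22
      rw [hε1] at u1
      rw [hε2] at u2
      have := mul_le_mul_of_nonneg_right hcase hε0.le
      rw [d₁, d₂]
      linarith
    · have hcontII : ∀ a b : ℝ, IntervalIntegrable (fun s => deriv (deriv f) s * s) volume a b :=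
        fun a b => ((aCont hf).mul continuous_id').intervalIntegrable a b
      have split₁ : (∫ s in w₁..w₁', deriv (deriv f) s * s)
          = (∫ s in w₁..w₂', deriv (deriv f) s * s) + ∫ s in w₂'..w₁', deriv (deriv f) s * s :=
        (intervalIntegral.integral_add_adjacent_intervals (hcontII w₁ w₂') (hcontII w₂' w₁')).symm
      have split₂ : (∫ s in w₂'..w₂, deriv (deriv f) s * s)
          = (∫ s in w₂'..w₁', deriv (deriv f) s * s) + ∫ s in w₁'..w₂, deriv (deriv f) s * s :=
        (intervalIntegral.integral_add_adjacent_intervals (hcontII w₂' w₁') (hcontII w₁' w₂)).symm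
      have u1 := B_upper hf hconv hw12.le
      have u2 := B_lower hf hconv hw12'.le
      have hm : 0 < deriv f w₂' - deriv f w₁ := by rw [hw₂']; linarith
      have heqm : deriv f w₂' - deriv f w₁ = deriv f w₂ - deriv f w₁' := by
        rw [hw₂', hw₁']; ring
      have hmul : w₂' * (deriv f w₂' - deriv f w₁) < w₁' * (deriv f w₂' - deriv f w₁) :=
        mul_lt_mul_of_pos_right hcase hm
      rw [heqm] at hmul
      rw [heqm] at u1
      rw [d₁, d₂, split₁, split₂]
      linarith
  have h3 := mul_lt_mul_of_pos_left hBlt ht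
  rw [mul_sub, mul_sub] at h3
  linarith

lemma trace_core_left {f φ : ℝ → ℝ} {M : ℝ} (hf : ContDiff ℝ 2 f)
    (hconv : ∀ u : ℝ, 0 ≤ deriv (deriv f) u)
    (hdeg : volume {u : ℝ | deriv (deriv f) u = 0} = 0)
    (hφmeas : Measurable φ) (hφbdd : ∀ x : ℝ, |φ x| ≤ M)
    {x t : ℝ} (ht : 0 < t) {zs ws : ℕ → ℝ}
    (hzs : Tendsto zs atTop (nhdsWithin x (Iio x)))
    (hws : ∀ n, ws n ∈ maxSet f φ (zs n) t) :
    Tendsto ws atTop (nhds (uMinus f φ x t)) := by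
  have hδ := deltaF_pos hf hconv hdeg M
  have hzx : Tendsto zs atTop (nhds x) := hzs.mono_right nhdsWithin_le_nhds
  have hzlt : ∀ᶠ n in atTop, zs n < x := hzs.eventually_mem self_mem_nhdsWithin
  have hzcl : ∀ᶠ n in atTop, x - zs n ≤ t * deltaF f M := by
    have := hzx.eventually (Metric.closedBall_mem_nhds x (mul_pos ht hδ))
    filter_upwards [this] with n hn
    have : |zs n - x| ≤ t * deltaF f M := by
      simpa [Real.dist_eq] using hn
    linarith [abs_le.mp this |>.1]
  apply tendsto_of_subseq_tendsto
  intro ns hns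
  have hbdd : ∀ k, ws (ns k) ∈ Icc (-M) M := fun k =>
    maxSet_subset hf hconv hdeg hφmeas hφbdd ht (zs (ns k)) (hws (ns k))
  obtain ⟨L, _, ms, hms, hLlim⟩ :=
    tendsto_subseq_of_bounded (Metric.isBounded_Icc (-M) M) hbdd
  have hidx : Tendsto (fun k => ns (ms k)) atTop atTop := hns.comp hms.tendsto_atTop
  have hLlim' : Tendsto (fun k => ws (ns (ms k))) atTop (nhds L) := hLlim
  have hLmem : L ∈ maxSet f φ x t := by
    refine limit_mem_maxSet hf hconv hdeg hφmeas hφbdd (ts := fun _ => t) ht (fun _ => ht)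
      (hzx.comp hidx) tendsto_const_nhds (fun k => hws (ns (ms k))) hLlim'
  -- L is an upper bound of maxSet x t
  have hub : ∀ w ∈ maxSet f φ x t, w ≤ L := by
    intro w hw
    have hineq : ∀ᶠ k in atTop,
        t * (deriv f w - deriv f (ws (ns (ms k)))) ≤ x - zs (ns (ms k)) := by
      filter_upwards [hidx.eventually hzlt, hidx.eventually hzcl] with k h1 h2
      exact key_mono hf hconv hdeg hφmeas hφbdd ht h1 h2 (hws (ns (ms k))) hw
    have hlhs : Tendsto (fun k => t * (deriv f w - deriv f (ws (ns (ms k))))) atTop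
        (nhds (t * (deriv f w - deriv f L))) := by
      have hgL : Tendsto (fun k => deriv f (ws (ns (ms k)))) atTop (nhds (deriv f L)) :=
        ((gCont hf).tendsto L).comp hLlim'
      exact (tendsto_const_nhds.sub hgL).const_mul t
    have hrhs : Tendsto (fun k => x - zs (ns (ms k))) atTop (nhds (x - x)) :=
      tendsto_const_nhds.sub (hzx.comp hidx)
    have := le_of_tendsto_of_tendsto hlhs hrhs hineq
    have hgle : deriv f w ≤ deriv f L := by nlinarith
    exact ((gStrict hf hconv hdeg).le_iff_le).mp hgle
  have hLeq : L = uMinus f φ x t := by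
    refine le_antisymm ?_ ?_
    · exact le_csSup (BddAbove.mono (maxSet_subset hf hconv hdeg hφmeas hφbdd ht x) bddAbove_Icc)
        hLmem
    · exact csSup_le (maxSet_nonempty hf hconv hdeg hφmeas hφbdd ht x) hub
  exact ⟨ms, hLeq ▸ hLlim'⟩

lemma trace_core_right {f φ : ℝ → ℝ} {M : ℝ} (hf : ContDiff ℝ 2 f)
    (hconv : ∀ u : ℝ, 0 ≤ deriv (deriv f) u)
    (hdeg : volume {u : ℝ | deriv (deriv f) u = 0} = 0)
    (hφmeas : Measurable φ) (hφbdd : ∀ x : ℝ, |φ x| ≤ M)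
    {x t : ℝ} (ht : 0 < t) {zs ws : ℕ → ℝ}
    (hzs : Tendsto zs atTop (nhdsWithin x (Ioi x)))
    (hws : ∀ n, ws n ∈ maxSet f φ (zs n) t) :
    Tendsto ws atTop (nhds (uPlus f φ x t)) := by
  have hδ := deltaF_pos hf hconv hdeg M
  have hzx : Tendsto zs atTop (nhds x) := hzs.mono_right nhdsWithin_le_nhds
  have hzlt : ∀ᶠ n in atTop, x < zs n := hzs.eventually_mem self_mem_nhdsWithin
  have hzcl : ∀ᶠ n in atTop, zs n - x ≤ t * deltaF f M := by
    have := hzx.eventually (Metric.closedBall_mem_nhds x (mul_pos ht hδ))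
    filter_upwards [this] with n hn
    have : |zs n - x| ≤ t * deltaF f M := by
      simpa [Real.dist_eq] using hn
    linarith [abs_le.mp this |>.2]
  apply tendsto_of_subseq_tendsto
  intro ns hns
  have hbdd : ∀ k, ws (ns k) ∈ Icc (-M) M := fun k =>
    maxSet_subset hf hconv hdeg hφmeas hφbdd ht (zs (ns k)) (hws (ns k))
  obtain ⟨L, _, ms, hms, hLlim⟩ :=
    tendsto_subseq_of_bounded (Metric.isBounded_Icc (-M) M) hbdd
  have hidx : Tendsto (fun k => ns (ms k)) atTop atTop := hns.comp hms.tendsto_atTop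
  have hLlim' : Tendsto (fun k => ws (ns (ms k))) atTop (nhds L) := hLlim
  have hLmem : L ∈ maxSet f φ x t := by
    refine limit_mem_maxSet hf hconv hdeg hφmeas hφbdd (ts := fun _ => t) ht (fun _ => ht)
      (hzx.comp hidx) tendsto_const_nhds (fun k => hws (ns (ms k))) hLlim'
  have hlb : ∀ w ∈ maxSet f φ x t, L ≤ w := by
    intro w hw
    have hineq : ∀ᶠ k in atTop,
        t * (deriv f (ws (ns (ms k))) - deriv f w) ≤ zs (ns (ms k)) - x := by
      filter_upwards [hidx.eventually hzlt, hidx.eventually hzcl] with k h1 h2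
      exact key_mono hf hconv hdeg hφmeas hφbdd ht h1 h2 hw (hws (ns (ms k)))
    have hlhs : Tendsto (fun k => t * (deriv f (ws (ns (ms k))) - deriv f w)) atTop
        (nhds (t * (deriv f L - deriv f w))) := by
      have hgL : Tendsto (fun k => deriv f (ws (ns (ms k)))) atTop (nhds (deriv f L)) :=
        ((gCont hf).tendsto L).comp hLlim'
      exact (hgL.sub tendsto_const_nhds).const_mul t
    have hrhs : Tendsto (fun k => zs (ns (ms k)) - x) atTop (nhds (x - x)) :=
      (hzx.comp hidx).sub tendsto_const_nhds
    have := le_of_tendsto_of_tendsto hlhs hrhs hineq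
    have hgle : deriv f L ≤ deriv f w := by nlinarith
    exact ((gStrict hf hconv hdeg).le_iff_le).mp hgle
  have hLeq : L = uPlus f φ x t := by
    refine le_antisymm ?_ ?_
    · exact le_csInf (maxSet_nonempty hf hconv hdeg hφmeas hφbdd ht x) hlb
    · exact csInf_le (BddBelow.mono (maxSet_subset hf hconv hdeg hφmeas hφbdd ht x) bddBelow_Icc)
        hLmem
  exact ⟨ms, hLeq ▸ hLlim'⟩

/-- existence of strong one-sided traces, and limits of `u^±` along
converging sequences are maximizers. -/
theorem stmt2_strong_traces
    (f φ : ℝ → ℝ) (M : ℝ)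
    (hf : ContDiff ℝ 2 f)
    (hconv : ∀ u : ℝ, 0 ≤ deriv (deriv f) u)
    (hdeg : volume {u : ℝ | deriv (deriv f) u = 0} = 0)
    (hφmeas : Measurable φ)
    (hφbdd : ∀ x : ℝ, |φ x| ≤ M) :
    (∀ x t : ℝ, 0 < t →
      Tendsto (fun x' : ℝ => uMinus f φ x' t) (nhdsWithin x (Set.Iio x))
        (nhds (uMinus f φ x t)) ∧
      Tendsto (fun x' : ℝ => uPlus f φ x' t) (nhdsWithin x (Set.Iio x))
        (nhds (uMinus f φ x t)) ∧
      Tendsto (fun x' : ℝ => uMinus f φ x' t) (nhdsWithin x (Set.Ioi x))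
        (nhds (uPlus f φ x t)) ∧
      Tendsto (fun x' : ℝ => uPlus f φ x' t) (nhdsWithin x (Set.Ioi x))
        (nhds (uPlus f φ x t))) ∧
    (∀ (x t : ℝ) (xs ts : ℕ → ℝ) (L : ℝ), 0 < t → (∀ n : ℕ, 0 < ts n) →
      Tendsto xs atTop (nhds x) → Tendsto ts atTop (nhds t) →
      (Tendsto (fun n : ℕ => uPlus f φ (xs n) (ts n)) atTop (nhds L) →
        L ∈ maxSet f φ x t) ∧
      (Tendsto (fun n : ℕ => uMinus f φ (xs n) (ts n)) atTop (nhds L) →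
        L ∈ maxSet f φ x t)) := by
  constructor
  · intro x t ht
    refine ⟨?_, ?_, ?_, ?_⟩
    · rw [tendsto_iff_seq_tendsto]
      intro zs hzs
      exact trace_core_left hf hconv hdeg hφmeas hφbdd ht hzs
        (fun n => uMinus_mem hf hconv hdeg hφmeas hφbdd ht (zs n))
    · rw [tendsto_iff_seq_tendsto]
      intro zs hzs
      exact trace_core_left hf hconv hdeg hφmeas hφbdd ht hzs
        (fun n => uPlus_mem hf hconv hdeg hφmeas hφbdd ht (zs n))
    · rw [tendsto_iff_seq_tendsto]
      intro zs hzs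
      exact trace_core_right hf hconv hdeg hφmeas hφbdd ht hzs
        (fun n => uMinus_mem hf hconv hdeg hφmeas hφbdd ht (zs n))
    · rw [tendsto_iff_seq_tendsto]
      intro zs hzs
      exact trace_core_right hf hconv hdeg hφmeas hφbdd ht hzs
        (fun n => uPlus_mem hf hconv hdeg hφmeas hφbdd ht (zs n))
  · intro x t xs ts L ht hts hxs htsl
    constructor
    · intro hlim
      exact limit_mem_maxSet hf hconv hdeg hφmeas hφbdd ht hts hxs htsl
        (fun n => uPlus_mem hf hconv hdeg hφmeas hφbdd (hts n) (xs n)) hlim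
    · intro hlim
      exact limit_mem_maxSet hf hconv hdeg hφmeas hφbdd ht hts hxs htsl
        (fun n => uMinus_mem hf hconv hdeg hφmeas hφbdd (hts n) (xs n)) hlim
end

section
/- (Regularity of the solution at each fixed time.) For each fixed t > 0: (i) u⁺(x,t) ≤ u⁻(x,t) for every x ∈ ℝ, and the set of jump points {x ∈ ℝ : u⁺(x,t) < u⁻(x,t)} is at most countable; (ii) the function x ↦ f'(u⁺(x,t)) has locally bounded variation on ℝ. -/
open MeasureTheory Filter Set

/-! ### Auxiliary lemmas -/

section Aux

variable {f φ : ℝ → ℝ} {M : ℝ}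

lemma aux_c2 (hf : ContDiff ℝ 2 f) : Continuous (deriv (deriv f)) := by
  have h2 : ContDiff ℝ (1+1) f := by norm_num; exact hf
  have h1 : ContDiff ℝ 1 (deriv f) := (contDiff_succ_iff_deriv.mp h2).2.2
  exact h1.continuous_deriv le_rfl

lemma aux_cg (hf : ContDiff ℝ 2 f) : Continuous (deriv f) := by
  have h2 : ContDiff ℝ (1+1) f := by norm_num; exact hf
  exact ((contDiff_succ_iff_deriv.mp h2).2.2).continuous

lemma aux_hd (hf : ContDiff ℝ 2 f) (s : ℝ) :
    HasDerivAt (deriv f) (deriv (deriv f) s) s := by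
  have h2 : ContDiff ℝ (1+1) f := by norm_num; exact hf
  have h1 : ContDiff ℝ 1 (deriv f) := (contDiff_succ_iff_deriv.mp h2).2.2
  exact ((h1.differentiable one_ne_zero) s).hasDerivAt

lemma aux_sm (hf : ContDiff ℝ 2 f)
    (hconv : ∀ u : ℝ, 0 ≤ deriv (deriv f) u)
    (hdeg : volume {u : ℝ | deriv (deriv f) u = 0} = 0) :
    StrictMono (deriv f) := by
  have h2 : ContDiff ℝ (1+1) f := by norm_num; exact hf
  have h1 : ContDiff ℝ 1 (deriv f) := (contDiff_succ_iff_deriv.mp h2).2.2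
  have hdiff : Differentiable ℝ (deriv f) := h1.differentiable one_ne_zero
  have hmono : Monotone (deriv f) := monotone_of_deriv_nonneg hdiff hconv
  have key : ∀ a b : ℝ, a < b → deriv f a = deriv f b → False := by
    intro a b h heq
    have hconst : ∀ x ∈ Icc a b, deriv f x = deriv f a := fun x hx =>
      le_antisymm (heq ▸ hmono hx.2) (hmono hx.1)
    have hsub : Ioo a b ⊆ {u : ℝ | deriv (deriv f) u = 0} := by
      intro x hx
      have hev : deriv f =ᶠ[nhds x] (fun _ => deriv f a) := by
        filter_upwards [Ioo_mem_nhds hx.1 hx.2] with y hy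
        exact hconst y (Ioo_subset_Icc_self hy)
      have hd : deriv (deriv f) x = deriv (fun _ : ℝ => deriv f a) x := hev.deriv_eq
      simpa [deriv_const] using hd
    have hle := measure_mono (μ := volume) hsub
    rw [hdeg, Real.volume_Ioo] at hle
    have : (0:ℝ) < b - a := by linarith
    simp [ENNReal.ofReal_eq_zero, le_zero_iff, not_lt.mpr, this.not_ge] at hle
  refine hmono.strictMono_of_injective ?_
  intro a b hab
  by_contra hne
  rcases lt_or_gt_of_ne hne with h | h
  · exact key a b h hab
  · exact key b a h hab.symm

lemma aux_int_phi (hc2 : Continuous (deriv (deriv f))) (hcg : Continuous (deriv f))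
    (hφmeas : Measurable φ) (hφbdd : ∀ x : ℝ, |φ x| ≤ M)
    (x t a b : ℝ) :
    IntervalIntegrable (fun s => deriv (deriv f) s * φ (x - t * deriv f s)) volume a b := by
  have hmeas : Measurable (fun s => deriv (deriv f) s * φ (x - t * deriv f s)) :=
    hc2.measurable.mul (hφmeas.comp ((continuous_const.sub
      (continuous_const.mul hcg)).measurable))
  obtain ⟨C, hC⟩ := (isCompact_uIcc (a := a) (b := b)).exists_bound_of_continuousOn hc2.continuousOn
  rw [intervalIntegrable_iff]
  apply Measure.integrableOn_of_bounded (M := C * M)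
  · exact ((measure_mono uIoc_subset_uIcc).trans_lt (isCompact_uIcc.measure_lt_top)).ne
  · exact hmeas.aestronglyMeasurable
  · filter_upwards [ae_restrict_mem measurableSet_uIoc] with s hs
    have h1 : ‖deriv (deriv f) s‖ ≤ C := hC s (uIoc_subset_uIcc hs)
    have h2 : |φ (x - t * deriv f s)| ≤ M := hφbdd _
    have hC0 : 0 ≤ C := le_trans (norm_nonneg _) h1
    calc ‖deriv (deriv f) s * φ (x - t * deriv f s)‖
        = ‖deriv (deriv f) s‖ * ‖φ (x - t * deriv f s)‖ := norm_mul _ _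
      _ ≤ C * M := mul_le_mul h1 h2 (norm_nonneg _) hC0

lemma aux_int_id (hc2 : Continuous (deriv (deriv f))) (a b : ℝ) :
    IntervalIntegrable (fun s => deriv (deriv f) s * s) volume a b :=
  (hc2.mul continuous_id).intervalIntegrable a b

lemma aux_int_full (hc2 : Continuous (deriv (deriv f))) (hcg : Continuous (deriv f))
    (hφmeas : Measurable φ) (hφbdd : ∀ x : ℝ, |φ x| ≤ M)
    (x t a b : ℝ) :
    IntervalIntegrable (fun s => deriv (deriv f) s * (φ (x - t * deriv f s) - s)) volume a b := by
  have := (aux_int_phi hc2 hcg hφmeas hφbdd x t a b).sub (aux_int_id hc2 a b)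
  convert this using 2 with s
  ring

lemma aux_eFun_diff (hc2 : Continuous (deriv (deriv f))) (hcg : Continuous (deriv f))
    (hφmeas : Measurable φ) (hφbdd : ∀ x : ℝ, |φ x| ≤ M)
    (x t a b : ℝ) :
    eFun f φ b x t - eFun f φ a x t
      = t * ∫ s in a..b, deriv (deriv f) s * (φ (x - t * deriv f s) - s) := by
  have h1 := intervalIntegral.integral_add_adjacent_intervals
    (aux_int_full hc2 hcg hφmeas hφbdd x t 0 a) (aux_int_full hc2 hcg hφmeas hφbdd x t a b)
  simp only [eFun]
  rw [← h1]
  ring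

lemma aux_split (hc2 : Continuous (deriv (deriv f))) (hcg : Continuous (deriv f))
    (hφmeas : Measurable φ) (hφbdd : ∀ x : ℝ, |φ x| ≤ M)
    (x t a b : ℝ) :
    (∫ s in a..b, deriv (deriv f) s * (φ (x - t * deriv f s) - s))
      = (∫ s in a..b, deriv (deriv f) s * φ (x - t * deriv f s))
        - ∫ s in a..b, deriv (deriv f) s * s := by
  rw [← intervalIntegral.integral_sub (aux_int_phi hc2 hcg hφmeas hφbdd x t a b)
    (aux_int_id hc2 a b)]
  congr 1
  funext s
  ring

lemma aux_subst_phi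
    (hd : ∀ s, HasDerivAt (deriv f) (deriv (deriv f) s) s)
    (hcg : Continuous (deriv f))
    (hsm : StrictMono (deriv f))
    (hconv : ∀ u : ℝ, 0 ≤ deriv (deriv f) u)
    (x t a b : ℝ) (ht : 0 < t) (hab : a ≤ b) :
    t * ∫ s in a..b, deriv (deriv f) s * φ (x - t * deriv f s)
      = ∫ ξ in Icc (x - t * deriv f b) (x - t * deriv f a), φ ξ := by
  set g := deriv f with hg
  set h : ℝ → ℝ := fun s => x - t * g s with hh
  have hanti : StrictAnti h := by
    intro u v huv
    have := hsm huv
    simp only [hh]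
    nlinarith
  have hderiv : ∀ s ∈ Icc a b, HasDerivWithinAt h (-(t * deriv (deriv f) s)) (Icc a b) s := by
    intro s _
    exact ((hd s).const_mul t).const_sub x |>.hasDerivWithinAt
  have hinj : InjOn h (Icc a b) := hanti.injective.injOn
  have himg : h '' Icc a b = Icc (h b) (h a) := by
    apply Subset.antisymm
    · rintro ξ ⟨s, hs, rfl⟩
      exact ⟨hanti.antitone hs.2, hanti.antitone hs.1⟩
    · have hch : ContinuousOn h (Icc a b) :=
        ((continuous_const.sub (continuous_const.mul hcg)).continuousOn)
      exact intermediate_value_Icc' hab hch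
  have key := integral_image_eq_integral_abs_deriv_smul measurableSet_Icc hderiv hinj φ
  rw [himg] at key
  rw [key]
  rw [intervalIntegral.integral_of_le hab, ← MeasureTheory.integral_Icc_eq_integral_Ioc,
    ← MeasureTheory.integral_const_mul]
  apply setIntegral_congr_fun measurableSet_Icc
  intro s _
  have habs : |(-(t * deriv (deriv f) s))| = t * deriv (deriv f) s := by
    rw [abs_neg, abs_of_nonneg (by have := hconv s; positivity)]
  simp only [smul_eq_mul, habs, hh]
  ring

lemma aux_subst_s
    (hd : ∀ s, HasDerivAt (deriv f) (deriv (deriv f) s) s)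
    (hcg : Continuous (deriv f))
    (hsm : StrictMono (deriv f))
    (hconv : ∀ u : ℝ, 0 ≤ deriv (deriv f) u)
    (a b : ℝ) (hab : a ≤ b) :
    ∫ s in a..b, deriv (deriv f) s * s
      = ∫ θ in Icc (deriv f a) (deriv f b), Function.invFun (deriv f) θ := by
  set g := deriv f with hg
  have hderiv : ∀ s ∈ Icc a b, HasDerivWithinAt g (deriv (deriv f) s) (Icc a b) s :=
    fun s _ => (hd s).hasDerivWithinAt
  have himg : g '' Icc a b = Icc (g a) (g b) := by
    apply Subset.antisymm
    · rintro θ ⟨s, hs, rfl⟩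
      exact ⟨hsm.monotone hs.1, hsm.monotone hs.2⟩
    · exact intermediate_value_Icc hab hcg.continuousOn
  have key := integral_image_eq_integral_abs_deriv_smul measurableSet_Icc hderiv
    (hsm.injective.injOn) (Function.invFun g)
  rw [himg] at key
  rw [key, intervalIntegral.integral_of_le hab, ← MeasureTheory.integral_Icc_eq_integral_Ioc]
  apply setIntegral_congr_fun measurableSet_Icc
  intro s _
  simp only [smul_eq_mul, abs_of_nonneg (hconv s),
    Function.leftInverse_invFun hsm.injective s]
  exact (congrArg (· * s) (abs_of_nonneg (hconv s : 0 ≤ deriv (deriv f) s))).symm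

lemma aux_shift (g : ℝ → ℝ) (hsm : StrictMono g) (α β δ : ℝ) (hαβ : α < β) (hδ : 0 < δ)
    (hsub : Icc α (β + δ) ⊆ range g) :
    ∫ θ in α..β, Function.invFun g θ < ∫ θ in (α+δ)..(β+δ), Function.invFun g θ := by
  set G := Function.invFun g with hG
  have hright : ∀ θ ∈ Icc α (β + δ), g (G θ) = θ := by
    intro θ hθ
    exact Function.invFun_eq (hsub hθ)
  have hmonoOn : MonotoneOn G (Icc α (β + δ)) := by
    intro θ1 h1 θ2 h2 h12
    by_contra hcon
    push_neg at hcon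
    have := hsm hcon
    rw [hright _ h1, hright _ h2] at this
    linarith
  have hstrict : ∀ θ ∈ Icc α β, G θ < G (θ + δ) := by
    intro θ hθ
    have h1 : θ ∈ Icc α (β + δ) := ⟨hθ.1, by linarith [hθ.2]⟩
    have h2 : θ + δ ∈ Icc α (β + δ) := ⟨by linarith [hθ.1], by linarith [hθ.2]⟩
    by_contra hcon
    push_neg at hcon
    have := hsm.monotone hcon
    rw [hright _ h1, hright _ h2] at this
    linarith
  have int1 : IntervalIntegrable G volume α β := by
    apply MonotoneOn.intervalIntegrable
    apply hmonoOn.mono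
    rw [uIcc_of_le hαβ.le]
    exact Icc_subset_Icc le_rfl (by linarith)
  have int2 : IntervalIntegrable (fun θ => G (θ + δ)) volume α β := by
    apply MonotoneOn.intervalIntegrable
    intro θ1 h1 θ2 h2 h12
    rw [uIcc_of_le hαβ.le] at h1 h2
    exact hmonoOn ⟨by linarith [h1.1], by linarith [h1.2]⟩
      ⟨by linarith [h2.1], by linarith [h2.2]⟩ (by linarith)
  have hpos : 0 < ∫ θ in α..β, (G (θ + δ) - G θ) := by
    apply intervalIntegral.intervalIntegral_pos_of_pos_on (int2.sub int1)
    · intro θ hθ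
      have := hstrict θ ⟨hθ.1.le, hθ.2.le⟩
      linarith
    · exact hαβ
  rw [intervalIntegral.integral_sub int2 int1] at hpos
  rw [← intervalIntegral.integral_comp_add_right G δ]
  linarith

lemma aux_pos (hc2 : Continuous (deriv (deriv f)))
    (hconv : ∀ u : ℝ, 0 ≤ deriv (deriv f) u)
    (hdeg : volume {u : ℝ | deriv (deriv f) u = 0} = 0)
    (w : ℝ → ℝ) (hw : Continuous w) (a b : ℝ) (hab : a < b)
    (hw0 : ∀ s ∈ Ioc a b, 0 ≤ w s) (hwpos : ∀ s ∈ Ioo a b, 0 < w s) :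
    0 < ∫ s in a..b, deriv (deriv f) s * w s := by
  rw [intervalIntegral.integral_of_le hab.le]
  have hint : IntegrableOn (fun s => deriv (deriv f) s * w s) (Ioc a b) volume := by
    rw [← intervalIntegrable_iff_integrableOn_Ioc_of_le hab.le]
    exact (hc2.mul hw).intervalIntegrable a b
  have h0 : (0 : ℝ → ℝ) ≤ᵐ[volume.restrict (Ioc a b)] fun s => deriv (deriv f) s * w s := by
    filter_upwards [ae_restrict_mem measurableSet_Ioc] with s hs
    exact mul_nonneg (hconv s) (hw0 s hs)
  rw [setIntegral_pos_iff_support_of_nonneg_ae h0 hint]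
  have hsub : Ioo a b \ {u : ℝ | deriv (deriv f) u = 0}
      ⊆ Function.support (fun s => deriv (deriv f) s * w s) ∩ Ioc a b := by
    rintro s ⟨hs, hsz⟩
    refine ⟨?_, Ioo_subset_Ioc_self hs⟩
    have h1 : deriv (deriv f) s ≠ 0 := hsz
    have h2 : w s ≠ 0 := (hwpos s hs).ne'
    exact mul_ne_zero h1 h2
  have h1 : volume (Ioo a b \ {u : ℝ | deriv (deriv f) u = 0}) = volume (Ioo a b) :=
    measure_diff_null hdeg
  have h2 : 0 < volume (Ioo a b) := by
    rw [Real.volume_Ioo]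
    exact ENNReal.ofReal_pos.mpr (by linarith)
  calc (0 : ENNReal) < volume (Ioo a b) := h2
    _ = volume (Ioo a b \ {u : ℝ | deriv (deriv f) u = 0}) := h1.symm
    _ ≤ volume (Function.support (fun s => deriv (deriv f) s * w s) ∩ Ioc a b) := measure_mono hsub

lemma aux_eFun_cont (hc2 : Continuous (deriv (deriv f))) (hcg : Continuous (deriv f))
    (hφmeas : Measurable φ) (hφbdd : ∀ x : ℝ, |φ x| ≤ M)
    (x t : ℝ) : Continuous (fun u => eFun f φ u x t) := by
  exact continuous_const.mul (intervalIntegral.continuous_primitive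
    (fun a b => aux_int_full hc2 hcg hφmeas hφbdd x t a b) 0)

end Aux

section MaxSet

variable {f φ : ℝ → ℝ} {M : ℝ}

lemma aux_lt_up (hf : ContDiff ℝ 2 f)
    (hconv : ∀ u : ℝ, 0 ≤ deriv (deriv f) u)
    (hdeg : volume {u : ℝ | deriv (deriv f) u = 0} = 0)
    (hφmeas : Measurable φ) (hφbdd : ∀ x : ℝ, |φ x| ≤ M)
    (x t : ℝ) (ht : 0 < t) {v : ℝ} (hv : M < v) :
    eFun f φ v x t < eFun f φ M x t := by
  have hc2 := aux_c2 hf; have hcg := aux_cg hf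
  have hdiff := aux_eFun_diff hc2 hcg hφmeas hφbdd x t M v
  have hcmp : (∫ s in M..v, deriv (deriv f) s * (φ (x - t * deriv f s) - s))
      ≤ ∫ s in M..v, deriv (deriv f) s * (M - s) := by
    apply intervalIntegral.integral_mono_on hv.le
      (aux_int_full hc2 hcg hφmeas hφbdd x t M v)
      ((hc2.mul (by continuity : Continuous (fun s : ℝ => M - s))).intervalIntegrable M v)
    intro s _
    have := (abs_le.mp (hφbdd (x - t * deriv f s))).2
    exact mul_le_mul_of_nonneg_left (by linarith) (hconv s)
  have hneg : (∫ s in M..v, deriv (deriv f) s * (M - s)) < 0 := by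
    have hpos := aux_pos hc2 hconv hdeg (fun s => s - M)
      (continuous_id.sub continuous_const) M v hv
      (fun s hs => show (0:ℝ) ≤ s - M by linarith [hs.1])
      (fun s hs => show (0:ℝ) < s - M by linarith [hs.1])
    have heq : (∫ s in M..v, deriv (deriv f) s * (M - s))
        = - ∫ s in M..v, deriv (deriv f) s * (s - M) := by
      rw [← intervalIntegral.integral_neg]
      congr 1; funext s; ring
    rw [heq]; linarith
  nlinarith

lemma aux_lt_down (hf : ContDiff ℝ 2 f)
    (hconv : ∀ u : ℝ, 0 ≤ deriv (deriv f) u)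
    (hdeg : volume {u : ℝ | deriv (deriv f) u = 0} = 0)
    (hφmeas : Measurable φ) (hφbdd : ∀ x : ℝ, |φ x| ≤ M)
    (x t : ℝ) (ht : 0 < t) {v : ℝ} (hv : v < -M) :
    eFun f φ v x t < eFun f φ (-M) x t := by
  have hc2 := aux_c2 hf; have hcg := aux_cg hf
  have hdiff := aux_eFun_diff hc2 hcg hφmeas hφbdd x t v (-M)
  have hcmp : (∫ s in v..(-M), deriv (deriv f) s * ((-M) - s))
      ≤ ∫ s in v..(-M), deriv (deriv f) s * (φ (x - t * deriv f s) - s) := by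
    apply intervalIntegral.integral_mono_on hv.le
      ((hc2.mul (by continuity : Continuous (fun s : ℝ => (-M) - s))).intervalIntegrable v (-M))
      (aux_int_full hc2 hcg hφmeas hφbdd x t v (-M))
    intro s _
    have := (abs_le.mp (hφbdd (x - t * deriv f s))).1
    exact mul_le_mul_of_nonneg_left (by linarith) (hconv s)
  have hneg : 0 < (∫ s in v..(-M), deriv (deriv f) s * ((-M) - s)) := by
    exact aux_pos hc2 hconv hdeg (fun s => (-M) - s)
      (continuous_const.sub continuous_id) v (-M) hv
      (fun s hs => show (0:ℝ) ≤ (-M) - s by linarith [hs.2])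
      (fun s hs => show (0:ℝ) < (-M) - s by linarith [hs.2])
  nlinarith

lemma aux_maxSet_nonempty (hf : ContDiff ℝ 2 f)
    (hconv : ∀ u : ℝ, 0 ≤ deriv (deriv f) u)
    (hdeg : volume {u : ℝ | deriv (deriv f) u = 0} = 0)
    (hφmeas : Measurable φ) (hφbdd : ∀ x : ℝ, |φ x| ≤ M)
    (x t : ℝ) (ht : 0 < t) :
    (maxSet f φ x t).Nonempty := by
  have hc2 := aux_c2 hf; have hcg := aux_cg hf
  have hM0 : 0 ≤ M := le_trans (abs_nonneg _) (hφbdd 0)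
  have hMle : (-M : ℝ) ≤ M := by linarith
  obtain ⟨w0, hw0mem, hw0max⟩ := isCompact_Icc.exists_isMaxOn
    (nonempty_Icc.mpr hMle) ((aux_eFun_cont hc2 hcg hφmeas hφbdd x t).continuousOn
      (s := Icc (-M) M))
  refine ⟨w0, fun v => ?_⟩
  rcases le_or_gt v M with h1 | h1
  · rcases le_or_gt (-M) v with h2 | h2
    · exact hw0max ⟨h2, h1⟩
    · exact le_trans (aux_lt_down hf hconv hdeg hφmeas hφbdd x t ht h2).le
        (hw0max ⟨le_refl _ |>.trans (by linarith), hMle⟩)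
  · exact le_trans (aux_lt_up hf hconv hdeg hφmeas hφbdd x t ht h1).le
      (hw0max ⟨hMle, le_refl M⟩)

lemma aux_maxSet_subset (hf : ContDiff ℝ 2 f)
    (hconv : ∀ u : ℝ, 0 ≤ deriv (deriv f) u)
    (hdeg : volume {u : ℝ | deriv (deriv f) u = 0} = 0)
    (hφmeas : Measurable φ) (hφbdd : ∀ x : ℝ, |φ x| ≤ M)
    (x t : ℝ) (ht : 0 < t) :
    maxSet f φ x t ⊆ Icc (-M) M := by
  intro w hw
  by_contra hcon
  simp only [mem_Icc, not_and_or, not_le] at hcon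
  rcases hcon with h | h
  · exact absurd (hw (-M)) (not_le.mpr (aux_lt_down hf hconv hdeg hφmeas hφbdd x t ht h))
  · exact absurd (hw M) (not_le.mpr (aux_lt_up hf hconv hdeg hφmeas hφbdd x t ht h))

lemma aux_maxSet_closed (hf : ContDiff ℝ 2 f)
    (hφmeas : Measurable φ) (hφbdd : ∀ x : ℝ, |φ x| ≤ M)
    (x t : ℝ) : IsClosed (maxSet f φ x t) := by
  have hc2 := aux_c2 hf; have hcg := aux_cg hf
  have : maxSet f φ x t = ⋂ v, {w : ℝ | eFun f φ v x t ≤ eFun f φ w x t} := by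
    ext w; simp [maxSet]
  rw [this]
  exact isClosed_iInter fun v => isClosed_le continuous_const
    (aux_eFun_cont hc2 hcg hφmeas hφbdd x t)

end MaxSet

section Mono

variable {f φ : ℝ → ℝ} {M : ℝ}

lemma aux_mono (hf : ContDiff ℝ 2 f)
    (hconv : ∀ u : ℝ, 0 ≤ deriv (deriv f) u)
    (hdeg : volume {u : ℝ | deriv (deriv f) u = 0} = 0)
    (hφmeas : Measurable φ) (hφbdd : ∀ x : ℝ, |φ x| ≤ M)
    (t : ℝ) (ht : 0 < t) {x1 x2 w1 w2 : ℝ} (hx : x1 < x2)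
    (h1 : w1 ∈ maxSet f φ x1 t) (h2 : w2 ∈ maxSet f φ x2 t) :
    x1 - t * deriv f w1 ≤ x2 - t * deriv f w2 := by
  have hc2 := aux_c2 hf; have hcg := aux_cg hf
  have hd := aux_hd hf; have hsm := aux_sm hf hconv hdeg
  by_contra hcon
  push_neg at hcon
  set δ : ℝ := (x2 - x1)/t with hδdef
  have hδ : 0 < δ := div_pos (by linarith) ht
  have htδ : t * δ = x2 - x1 := by rw [hδdef]; field_simp [ht.ne']
  have hgap : deriv f w1 + δ < deriv f w2 := by nlinarith
  have hw12 : w1 < w2 := hsm.lt_iff_lt.mp (by linarith)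
  obtain ⟨w', hw'mem, hw'⟩ := intermediate_value_Icc hw12.le hcg.continuousOn
      (show deriv f w1 + δ ∈ Icc (deriv f w1) (deriv f w2) from ⟨by linarith, by linarith⟩)
  obtain ⟨v, hvmem, hv⟩ := intermediate_value_Icc hw12.le hcg.continuousOn
      (show deriv f w2 - δ ∈ Icc (deriv f w1) (deriv f w2) from ⟨by linarith, by linarith⟩)
  have hv1 : w1 < v := hsm.lt_iff_lt.mp (by rw [hv]; linarith)
  have hw'2 : w' < w2 := hsm.lt_iff_lt.mp (by rw [hw']; linarith)
  -- optimality inequalities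
  have hopt1 : eFun f φ v x1 t - eFun f φ w1 x1 t ≤ 0 := by linarith [h1 v]
  have hopt2 : 0 ≤ eFun f φ w2 x2 t - eFun f φ w' x2 t := by linarith [h2 w']
  rw [aux_eFun_diff hc2 hcg hφmeas hφbdd x1 t w1 v,
    aux_split hc2 hcg hφmeas hφbdd x1 t w1 v, mul_sub] at hopt1
  rw [aux_eFun_diff hc2 hcg hφmeas hφbdd x2 t w' w2,
    aux_split hc2 hcg hφmeas hφbdd x2 t w' w2, mul_sub] at hopt2
  -- the φ-parts agree
  have hP : t * (∫ s in w1..v, deriv (deriv f) s * φ (x1 - t * deriv f s))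
      = t * (∫ s in w'..w2, deriv (deriv f) s * φ (x2 - t * deriv f s)) := by
    rw [aux_subst_phi hd hcg hsm hconv x1 t w1 v ht hv1.le,
      aux_subst_phi hd hcg hsm hconv x2 t w' w2 ht hw'2.le]
    have e1 : x1 - t * deriv f v = x2 - t * deriv f w2 := by rw [hv]; linear_combination htδ
    have e2 : x2 - t * deriv f w' = x1 - t * deriv f w1 := by rw [hw']; linear_combination -htδ
    rw [e1, e2]
  -- the s-parts compare strictly
  have hQ : (∫ s in w1..v, deriv (deriv f) s * s)
      < (∫ s in w'..w2, deriv (deriv f) s * s) := by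
    rw [aux_subst_s hd hcg hsm hconv w1 v hv1.le,
      aux_subst_s hd hcg hsm hconv w' w2 hw'2.le]
    have hαβ : deriv f w1 < deriv f v := by rw [hv]; linarith
    have e2 : deriv f w2 = deriv f v + δ := by rw [hv]; ring
    have hw'le : deriv f w' ≤ deriv f w2 := hsm.monotone hw'2.le
    rw [MeasureTheory.integral_Icc_eq_integral_Ioc, MeasureTheory.integral_Icc_eq_integral_Ioc,
      ← intervalIntegral.integral_of_le hαβ.le, ← intervalIntegral.integral_of_le hw'le,
      hw', e2]
    exact aux_shift _ hsm _ _ δ hαβ hδ (by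
      rw [← e2]
      exact (intermediate_value_Icc hw12.le hcg.continuousOn).trans (image_subset_range _ _))
  have hQ' := mul_lt_mul_of_pos_left hQ ht
  linarith

end Mono

section LBV

lemma aux_evar_sub_le (h1 h2 : ℝ → ℝ) (s : Set ℝ) :
    eVariationOn (fun x => h1 x - h2 x) s ≤ eVariationOn h1 s + eVariationOn h2 s := by
  apply iSup_le
  rintro ⟨n, ⟨u, hu, us⟩⟩
  calc ∑ i ∈ Finset.range n,
        edist (h1 (u (i+1)) - h2 (u (i+1))) (h1 (u i) - h2 (u i))
      ≤ ∑ i ∈ Finset.range n,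
        (edist (h1 (u (i+1))) (h1 (u i)) + edist (h2 (u (i+1))) (h2 (u i))) := by
        apply Finset.sum_le_sum
        intro i _
        rw [edist_dist, edist_dist, edist_dist]
        refine le_trans (ENNReal.ofReal_le_ofReal (dist_sub_sub_le _ _ _ _)) ?_
        exact ENNReal.ofReal_add_le
    _ = (∑ i ∈ Finset.range n, edist (h1 (u (i+1))) (h1 (u i)))
        + ∑ i ∈ Finset.range n, edist (h2 (u (i+1))) (h2 (u i)) := Finset.sum_add_distrib
    _ ≤ eVariationOn h1 s + eVariationOn h2 s :=
        add_le_add (eVariationOn.sum_le (f := h1) (n := n) hu us) (eVariationOn.sum_le (f := h2) (n := n) hu us)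

lemma aux_lbv_sub {h1 h2 : ℝ → ℝ} (m1 : MonotoneOn h1 (univ : Set ℝ))
    (m2 : MonotoneOn h2 (univ : Set ℝ)) :
    LocallyBoundedVariationOn (fun x => h1 x - h2 x) (univ : Set ℝ) := by
  intro a b ha hb
  have b1 := m1.locallyBoundedVariationOn a b ha hb
  have b2 := m2.locallyBoundedVariationOn a b hb hb
  exact ne_top_of_le_ne_top (ENNReal.add_ne_top.mpr ⟨b1, b2⟩)
    (aux_evar_sub_le h1 h2 _)

end LBV

/-- at each fixed time the jump set is countable and `f'(u⁺(·,t))` has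
locally bounded variation. -/
theorem stmt3_regularity_fixed_time
    (f φ : ℝ → ℝ) (M : ℝ)
    (hf : ContDiff ℝ 2 f)
    (hconv : ∀ u : ℝ, 0 ≤ deriv (deriv f) u)
    (hdeg : volume {u : ℝ | deriv (deriv f) u = 0} = 0)
    (hφmeas : Measurable φ)
    (hφbdd : ∀ x : ℝ, |φ x| ≤ M) :
    ∀ t : ℝ, 0 < t →
      (∀ x : ℝ, uPlus f φ x t ≤ uMinus f φ x t) ∧
      Set.Countable {x : ℝ | uPlus f φ x t < uMinus f φ x t} ∧
      LocallyBoundedVariationOn (fun x : ℝ => deriv f (uPlus f φ x t)) Set.univ := by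
  intro t ht
  have hsm := aux_sm hf hconv hdeg
  have hne : ∀ x : ℝ, (maxSet f φ x t).Nonempty :=
    fun x => aux_maxSet_nonempty hf hconv hdeg hφmeas hφbdd x t ht
  have hsub : ∀ x : ℝ, maxSet f φ x t ⊆ Icc (-M) M :=
    fun x => aux_maxSet_subset hf hconv hdeg hφmeas hφbdd x t ht
  have hbb : ∀ x : ℝ, BddBelow (maxSet f φ x t) :=
    fun x => bddBelow_Icc.mono (hsub x)
  have hba : ∀ x : ℝ, BddAbove (maxSet f φ x t) :=
    fun x => (bddAbove_Icc (a := -M) (b := M)).mono (hsub x)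
  have hclosed : ∀ x : ℝ, IsClosed (maxSet f φ x t) :=
    fun x => aux_maxSet_closed hf hφmeas hφbdd x t
  have hplus : ∀ x : ℝ, uPlus f φ x t ∈ maxSet f φ x t :=
    fun x => (hclosed x).csInf_mem (hne x) (hbb x)
  have hminus : ∀ x : ℝ, uMinus f φ x t ∈ maxSet f φ x t :=
    fun x => (hclosed x).csSup_mem (hne x) (hba x)
  have hle : ∀ x : ℝ, uPlus f φ x t ≤ uMinus f φ x t :=
    fun x => csInf_le_csSup (hne x) (hbb x) (hba x)
  refine ⟨hle, ?_, ?_⟩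
  · -- countability of the jump set
    apply Set.PairwiseDisjoint.countable_of_isOpen
      (s := fun x : ℝ => Ioo (x - t * deriv f (uMinus f φ x t))
        (x - t * deriv f (uPlus f φ x t)))
    · intro x1 hx1 x2 hx2 hne12
      have key : ∀ y1 y2 : ℝ, y1 < y2 →
          Disjoint (Ioo (y1 - t * deriv f (uMinus f φ y1 t))
            (y1 - t * deriv f (uPlus f φ y1 t)))
          (Ioo (y2 - t * deriv f (uMinus f φ y2 t))
            (y2 - t * deriv f (uPlus f φ y2 t))) := by
        intro y1 y2 hy
        have hL := aux_mono hf hconv hdeg hφmeas hφbdd t ht hy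
          (hplus y1) (hminus y2)
        rw [Set.disjoint_left]
        rintro z ⟨_, hz2⟩ ⟨hz3, _⟩
        linarith
      rcases lt_or_gt_of_ne hne12 with h | h
      · exact key x1 x2 h
      · exact (key x2 x1 h).symm
    · exact fun x _ => isOpen_Ioo
    · intro x hx
      refine nonempty_Ioo.mpr ?_
      have : deriv f (uPlus f φ x t) < deriv f (uMinus f φ x t) := hsm hx
      nlinarith
  · -- locally bounded variation
    have m1 : MonotoneOn (fun x : ℝ => x / t) (univ : Set ℝ) := by
      intro a _ b _ hab
      exact (div_le_div_iff_of_pos_right ht).mpr hab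
    have m2 : MonotoneOn (fun x : ℝ => (x - t * deriv f (uPlus f φ x t)) / t)
        (univ : Set ℝ) := by
      intro a _ b _ hab
      rcases eq_or_lt_of_le hab with rfl | hab'
      · exact le_rfl
      · have := aux_mono hf hconv hdeg hφmeas hφbdd t ht hab' (hplus a) (hplus b)
        exact (div_le_div_iff_of_pos_right ht).mpr this
    have heq : (fun x : ℝ => deriv f (uPlus f φ x t))
        = fun x : ℝ => (fun x : ℝ => x / t) x
          - (fun x : ℝ => (x - t * deriv f (uPlus f φ x t)) / t) x := by
      funext x
      field_simp
      ring
    rw [heq]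
    exact aux_lbv_sub m1 m2
end
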